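/- Let H be analytic at distinct points σ₁, …, σ_r with directions rᵢ ∈ ℂᵐ, ℓᵢ ∈ ℂᵖ, and let E_r, A_r, B_r, C_r be the Loewner matrices defined by (E_r)_{ij} = −ℓᵢᵀ(H(σᵢ)−H(σⱼ))rⱼ/(σᵢ−σⱼ) (i≠j), (E_r)_{ii} = −ℓᵢᵀH'(σᵢ)rᵢ, (A_r)_{ij} = −ℓᵢᵀ(σᵢH(σᵢ)−σⱼH(σⱼ))rⱼ/(σᵢ−σⱼ) (i≠j), (A_r)_{ii} = −ℓᵢᵀ(H(σᵢ)+σᵢH'(σᵢ))rᵢ, C_r = [H(σ₁)r₁,…,H(σ_r)r_r], and B_r with i-th row ℓᵢᵀH(σᵢ). If σ_kE_r − A_r is invertible, then H_r(s) = C_r(sE_r − A_r)⁻¹B_r satisfies H_r(σ_k)r_k = H(σ_k)r_k. -/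
import Mathlib


open Matrix
open scoped Matrix

/-- Right tangential interpolation property of the Loewner realization
(Mayo–Antoulas): the rational function `H_r(s) = C_r (sE_r - A_r)⁻¹ B_r`
built from the Loewner matrices satisfies `H_r(σ_k) r_k = H(σ_k) r_k`
whenever `σ_k E_r - A_r` is invertible. -/
theorem loewner_right_tangential_interpolation
    {p m rr : ℕ}
    (H H' : ℂ → Matrix (Fin p) (Fin m) ℂ)
    (σs : Fin rr → ℂ) (hdist : Function.Injective σs)
    (ls : Fin rr → Fin p → ℂ) (rs : Fin rr → Fin m → ℂ)
    (hH' : ∀ (i : Fin rr) (a : Fin p) (b : Fin m),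
      HasDerivAt (fun z => H z a b) (H' (σs i) a b) (σs i))
    (Er Ar : Matrix (Fin rr) (Fin rr) ℂ) (Br : Matrix (Fin rr) (Fin m) ℂ)
    (Cr : Matrix (Fin p) (Fin rr) ℂ)
    (hEr : Er = Matrix.of fun i j =>
      if i = j then -(ls i ⬝ᵥ (H' (σs i) *ᵥ rs i))
      else -(ls i ⬝ᵥ ((H (σs i) - H (σs j)) *ᵥ rs j)) / (σs i - σs j))
    (hAr : Ar = Matrix.of fun i j =>
      if i = j then -(ls i ⬝ᵥ ((H (σs i) + σs i • H' (σs i)) *ᵥ rs i))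
      else -(ls i ⬝ᵥ ((σs i • H (σs i) - σs j • H (σs j)) *ᵥ rs j)) / (σs i - σs j))
    (hBr : Br = Matrix.of fun i j => (ls i ᵥ* H (σs i)) j)
    (hCr : Cr = Matrix.of fun i j => (H (σs j) *ᵥ rs j) i)
    (k : Fin rr) (hk : IsUnit (σs k • Er - Ar).det) :
    (Cr * (σs k • Er - Ar)⁻¹ * Br) *ᵥ rs k = H (σs k) *ᵥ rs k := by
  classical
  set M := σs k • Er - Ar with hM
  have key : M *ᵥ Pi.single k 1 = Br *ᵥ rs k := by
    funext i
    have hMik : (M *ᵥ Pi.single k 1) i = M i k := by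
      simp [Matrix.mulVec_single]
    rw [hMik]
    have hrhs : (Br *ᵥ rs k) i = ls i ⬝ᵥ (H (σs i) *ᵥ rs k) := by
      rw [hBr, Matrix.dotProduct_mulVec]; rfl
    rw [hrhs]
    by_cases hik : i = k
    · subst hik
      simp only [hM, Matrix.sub_apply, Matrix.smul_apply, hEr, hAr, Matrix.of_apply,
        if_pos rfl, smul_eq_mul]
      simp [Matrix.add_mulVec, Matrix.smul_mulVec, dotProduct_add, dotProduct_smul,
        smul_eq_mul]
    · have hne : σs i - σs k ≠ 0 := sub_ne_zero.mpr (fun h => hik (hdist h))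
      simp only [hM, Matrix.sub_apply, Matrix.smul_apply, hEr, hAr, Matrix.of_apply,
        if_neg hik, smul_eq_mul]
      rw [Matrix.sub_mulVec, Matrix.sub_mulVec, dotProduct_sub, dotProduct_sub,
        Matrix.smul_mulVec, Matrix.smul_mulVec, dotProduct_smul, dotProduct_smul]
      field_simp
      ring
  have hM1 : M⁻¹ * M = 1 := Matrix.nonsing_inv_mul M hk
  calc (Cr * M⁻¹ * Br) *ᵥ rs k
      = Cr *ᵥ (M⁻¹ *ᵥ (Br *ᵥ rs k)) := by
        simp [Matrix.mulVec_mulVec, Matrix.mul_assoc]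
    _ = Cr *ᵥ (M⁻¹ *ᵥ (M *ᵥ Pi.single k 1)) := by rw [key]
    _ = Cr *ᵥ Pi.single k 1 := by
        rw [Matrix.mulVec_mulVec, Matrix.mulVec_mulVec, Matrix.mul_assoc, hM1,
          Matrix.mul_one]
    _ = H (σs k) *ᵥ rs k := by
        funext i
        simp [Matrix.mulVec_single, hCr]
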